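/- Let q_{ij} (1 ≤ i, j ≤ n) be nonzero complex numbers with q_{ii} = 1 and q_{ji} = q_{ij}^{-1}. Let x = (x_1, …, x_m) ∈ {1, …, n}^m and let σ be a permutation of {1, …, m} such that x_{σ^{-1}(i)} = x_i for every i (σ stabilizes the word x). Then q^σ(x) = 1, where q^σ(x) = ∏ q_{x_{σ^{-1}(k)} x_{σ^{-1}(i)}}, the product being over all pairs 1 ≤ i < k ≤ m with σ^{-1}(i) > σ^{-1}(k). -/

import Mathlib

open scoped BigOperators

/-- `q^σ(x) = ∏ q_{x_{σ⁻¹(k)} x_{σ⁻¹(i)}}`, the product over all pairs `i < k`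
with `σ⁻¹(i) > σ⁻¹(k)`. -/
noncomputable def qSigma {n : ℕ} (q : Fin n → Fin n → ℂ) {m : ℕ} (x : Fin m → Fin n)
    (σ : Equiv.Perm (Fin m)) : ℂ :=
  ∏ p ∈ Finset.univ.filter (fun p : Fin m × Fin m => p.1 < p.2 ∧ σ⁻¹ p.2 < σ⁻¹ p.1),
    q (x (σ⁻¹ p.2)) (x (σ⁻¹ p.1))

/-- Key counting lemma: if `τ` stabilizes `x`, the number of inversions of `τ`
with value pattern `(a, b)` equals the number with pattern `(b, a)`. -/
lemma key_count {m n : ℕ} (τ : Equiv.Perm (Fin m)) (x : Fin m → Fin n)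
    (hx : ∀ i, x (τ i) = x i) (a b : Fin n) :
    (Finset.univ.filter (fun p : Fin m × Fin m =>
      (p.1 < p.2 ∧ τ p.2 < τ p.1) ∧ x p.1 = a ∧ x p.2 = b)).card
    = (Finset.univ.filter (fun p : Fin m × Fin m =>
      (p.1 < p.2 ∧ τ p.2 < τ p.1) ∧ x p.1 = b ∧ x p.2 = a)).card := by
  classical
  rcases eq_or_ne a b with rfl | hab
  · rfl
  have hx' : ∀ i, x (τ⁻¹ i) = x i := by
    intro i
    have := hx (τ⁻¹ i)
    simpa using this.symm
  -- swap the RHS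
  have hswap : (Finset.univ.filter (fun p : Fin m × Fin m =>
      (p.1 < p.2 ∧ τ p.2 < τ p.1) ∧ x p.1 = b ∧ x p.2 = a)).card
      = (Finset.univ.filter (fun p : Fin m × Fin m =>
      (p.2 < p.1 ∧ τ p.1 < τ p.2) ∧ x p.1 = a ∧ x p.2 = b)).card := by
    apply Finset.card_nbij' Prod.swap Prod.swap <;> simp [Prod.swap, Set.MapsTo] <;> tauto
  rw [hswap]
  set C1 : Finset (Fin m × Fin m) := Finset.univ.filter
    (fun p => (x p.1 = a ∧ x p.2 = b) ∧ p.1 < p.2) with hC1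
  set C2 : Finset (Fin m × Fin m) := Finset.univ.filter
    (fun p => (x p.1 = a ∧ x p.2 = b) ∧ τ p.1 < τ p.2) with hC2
  have hC : C1.card = C2.card := by
    apply Finset.card_nbij' (fun p => (τ⁻¹ p.1, τ⁻¹ p.2)) (fun p => (τ p.1, τ p.2))
    · intro p hp
      simp only [hC1, hC2, Finset.mem_filter, Finset.mem_univ, true_and] at hp ⊢
      exact Finset.mem_filter.2 ⟨Finset.mem_univ _, ⟨(hx' _).trans (Finset.mem_filter.1 hp).2.1.1,
        (hx' _).trans (Finset.mem_filter.1 hp).2.1.2⟩, by simpa using (Finset.mem_filter.1 hp).2.2⟩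
    · intro p hp
      simp only [hC1, hC2, Finset.mem_filter, Finset.mem_univ, true_and] at hp ⊢
      simpa [hx] using hp
    · intro p hp; simp
    · intro p hp; simp
  -- LHS as a filter of C1
  have hA : Finset.univ.filter (fun p : Fin m × Fin m =>
      (p.1 < p.2 ∧ τ p.2 < τ p.1) ∧ x p.1 = a ∧ x p.2 = b)
      = C1.filter (fun p => τ p.2 < τ p.1) := by
    simp only [hC1, Finset.filter_filter]
    apply Finset.filter_congr; intro p _; tauto
  have hB : Finset.univ.filter (fun p : Fin m × Fin m =>
      (p.2 < p.1 ∧ τ p.1 < τ p.2) ∧ x p.1 = a ∧ x p.2 = b)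
      = C2.filter (fun p => p.2 < p.1) := by
    simp only [hC2, Finset.filter_filter]
    apply Finset.filter_congr; intro p _; tauto
  rw [hA, hB]
  have hD : C1.filter (fun p => ¬ τ p.2 < τ p.1) = C2.filter (fun p => ¬ p.2 < p.1) := by
    ext p
    simp only [hC1, hC2, Finset.mem_filter, Finset.mem_univ, true_and, not_lt]
    constructor
    · rintro ⟨⟨hv, hlt⟩, hle⟩
      have hne0 : p.1 ≠ p.2 := fun h => hab (by rw [← hv.1, h, hv.2])
      have hne : τ p.1 ≠ τ p.2 := fun h => hne0 (τ.injective h)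
      exact ⟨⟨hv, lt_of_le_of_ne hle hne⟩, le_of_lt hlt⟩
    · rintro ⟨⟨hv, hlt⟩, hle⟩
      have hne : p.1 ≠ p.2 := fun h => hab (by rw [← hv.1, h, hv.2])
      exact ⟨⟨hv, lt_of_le_of_ne hle hne⟩, le_of_lt hlt⟩
  have h1 := Finset.card_filter_add_card_filter_not
    (s := C1) (p := fun p => τ p.2 < τ p.1)
  have h2 := Finset.card_filter_add_card_filter_not
    (s := C2) (p := fun p => p.2 < p.1)
  have hDcard : (C1.filter (fun p => ¬ τ p.2 < τ p.1)).card
      = (C2.filter (fun p => ¬ p.2 < p.1)).card := by rw [hD]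
  omega

/-- If `σ` stabilizes the word `x` (i.e. `x ∘ σ⁻¹ = x`), then `q^σ(x) = 1`. -/
theorem stmt5 {n : ℕ} (q : Fin n → Fin n → ℂ)
    (hq0 : ∀ i j, q i j ≠ 0) (hq1 : ∀ i, q i i = 1) (hq2 : ∀ i j, q j i = (q i j)⁻¹)
    (m : ℕ) (x : Fin m → Fin n) (σ : Equiv.Perm (Fin m))
    (hstab : ∀ i, x (σ⁻¹ i) = x i) :
    qSigma q x σ = 1 := by
  classical
  set I : Finset (Fin m × Fin m) := Finset.univ.filter
    (fun p : Fin m × Fin m => p.1 < p.2 ∧ σ⁻¹ p.2 < σ⁻¹ p.1) with hI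
  set N : Fin n × Fin n → ℕ := fun ab => (I.filter (fun p => (x p.1, x p.2) = ab)).card
    with hN
  have h1 : qSigma q x σ = ∏ p ∈ I, q (x p.2) (x p.1) :=
    Finset.prod_congr rfl (fun p hp => by rw [hstab, hstab])
  have h2 : ∏ p ∈ I, q (x p.2) (x p.1)
      = ∏ ab ∈ (Finset.univ : Finset (Fin n × Fin n)), (q ab.2 ab.1) ^ (N ab) := by
    rw [← Finset.prod_fiberwise I (fun p => (x p.1, x p.2)) (fun p => q (x p.2) (x p.1))]
    apply Finset.prod_congr rfl
    intro ab _
    calc ∏ p ∈ I.filter (fun p => (x p.1, x p.2) = ab), q (x p.2) (x p.1)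
        = ∏ _p ∈ I.filter (fun p => (x p.1, x p.2) = ab), q ab.2 ab.1 := by
          apply Finset.prod_congr rfl
          intro p hp
          simp only [Finset.mem_filter] at hp
          rw [← hp.2]
      _ = _ := Finset.prod_const _
  have hNswap : ∀ ab : Fin n × Fin n, N ab = N ab.swap := by
    intro ⟨a, b⟩
    have hrw : ∀ c d : Fin n, I.filter (fun p => (x p.1, x p.2) = (c, d))
        = Finset.univ.filter (fun p : Fin m × Fin m =>
          (p.1 < p.2 ∧ σ⁻¹ p.2 < σ⁻¹ p.1) ∧ x p.1 = c ∧ x p.2 = d) := by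
      intro c d
      rw [hI, Finset.filter_filter]
      apply Finset.filter_congr
      intro p _
      simp [Prod.ext_iff]
    simp only [hN, Prod.swap, hrw]
    exact key_count σ⁻¹ x hstab a b
  rw [h1, h2]
  apply Finset.prod_involution (fun ab _ => ab.swap)
  · intro ab _
    rw [hNswap ab, Prod.fst_swap, Prod.snd_swap, ← mul_pow]
    rw [hq2 ab.2 ab.1, mul_inv_cancel₀ (hq0 ab.2 ab.1), one_pow]
  · intro ab _ hne h
    apply hne
    have : ab.1 = ab.2 := by
      have := congrArg Prod.fst h
      simpa using this.symm
    rw [this, hq1, one_pow]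
  · intro ab _
    exact Prod.swap_swap ab
  · intro ab _
    exact Finset.mem_univ _
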